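/- Let A = 15+4√14 and B = 15-4√14. For every integer n ≥ 1, the quantity ((116+31√14)A^{n-1} - (116-31√14)B^{n-1})/√14 is a positive integer, and for n = 1, 2, 3 it equals 62, 1858, 55678 respectively. -/
import Mathlib

private def fseq : ℕ → ℤ
  | 0 => 62
  | 1 => 1858
  | (n+2) => 30 * fseq (n+1) - fseq n

private lemma fseq_pos : ∀ n, 0 < fseq n ∧ fseq n < fseq (n+1) := by
  intro n
  induction n with
  | zero => exact ⟨by norm_num [fseq], by norm_num [fseq]⟩
  | succ m ih =>
    obtain ⟨h1, h2⟩ := ih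
    have h3 : fseq (m+2) = 30 * fseq (m+1) - fseq m := rfl
    exact ⟨by linarith, by linarith⟩

private lemma fseq_eval : ∀ n : ℕ,
    (fseq n : ℝ) = ((116 + 31 * Real.sqrt 14) * (15 + 4 * Real.sqrt 14) ^ n
        - (116 - 31 * Real.sqrt 14) * (15 - 4 * Real.sqrt 14) ^ n) / Real.sqrt 14 := by
  have hs : Real.sqrt 14 ^ 2 = 14 := Real.sq_sqrt (by norm_num)
  have hs0 : Real.sqrt 14 ≠ 0 := ne_of_gt (Real.sqrt_pos.mpr (by norm_num))
  set s := Real.sqrt 14 with hsdef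
  have main : ∀ n : ℕ,
      ((fseq n : ℝ) = ((116 + 31*s) * (15 + 4*s) ^ n - (116 - 31*s) * (15 - 4*s) ^ n) / s) ∧
      ((fseq (n+1) : ℝ) = ((116 + 31*s) * (15 + 4*s) ^ (n+1) - (116 - 31*s) * (15 - 4*s) ^ (n+1)) / s) := by
    intro n
    induction n with
    | zero =>
      constructor
      · show ((62 : ℤ) : ℝ) = _
        push_cast
        field_simp
        ring
      · show ((1858 : ℤ) : ℝ) = _
        push_cast
        field_simp
        ring
    | succ m ih =>
      obtain ⟨ih1, ih2⟩ := ih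
      refine ⟨ih2, ?_⟩
      have h3 : fseq (m+2) = 30 * fseq (m+1) - fseq m := rfl
      have hA : (15 + 4*s)^(m+2) = 30*(15 + 4*s)^(m+1) - (15 + 4*s)^m := by
        have h2 : (15 + 4*s)^2 = 30*(15 + 4*s) - 1 := by linear_combination 16*hs
        calc (15 + 4*s)^(m+2) = (15 + 4*s)^m * (15 + 4*s)^2 := by ring
          _ = (15 + 4*s)^m * (30*(15 + 4*s) - 1) := by rw [h2]
          _ = 30*(15 + 4*s)^(m+1) - (15 + 4*s)^m := by ring
      have hB : (15 - 4*s)^(m+2) = 30*(15 - 4*s)^(m+1) - (15 - 4*s)^m := by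
        have h2 : (15 - 4*s)^2 = 30*(15 - 4*s) - 1 := by linear_combination 16*hs
        calc (15 - 4*s)^(m+2) = (15 - 4*s)^m * (15 - 4*s)^2 := by ring
          _ = (15 - 4*s)^m * (30*(15 - 4*s) - 1) := by rw [h2]
          _ = 30*(15 - 4*s)^(m+1) - (15 - 4*s)^m := by ring
      rw [h3]
      push_cast
      rw [ih1, ih2, hA, hB]
      field_simp
      ring
  exact fun n => (main n).1

theorem stmt_17
    (d : ℕ → ℝ)
    (hd : ∀ n : ℕ, d n =
      ((116 + 31 * Real.sqrt 14) * (15 + 4 * Real.sqrt 14) ^ (n-1)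
        - (116 - 31 * Real.sqrt 14) * (15 - 4 * Real.sqrt 14) ^ (n-1))
      / Real.sqrt 14) :
    (∀ n : ℕ, 1 ≤ n → ∃ k : ℤ, 0 < k ∧ d n = (k : ℝ)) ∧
    d 1 = 62 ∧ d 2 = 1858 ∧ d 3 = 55678 := by
  have hdn : ∀ m : ℕ, d (m+1) = (fseq m : ℝ) := by
    intro m
    rw [hd (m+1), fseq_eval m]
    norm_num
  refine ⟨?_, ?_, ?_, ?_⟩
  · intro n hn
    obtain ⟨m, rfl⟩ : ∃ m, n = m + 1 := ⟨n - 1, (Nat.succ_pred_eq_of_pos hn).symm⟩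
    exact ⟨fseq m, (fseq_pos m).1, hdn m⟩
  · rw [show (1:ℕ) = 0 + 1 from rfl, hdn 0]; norm_num [fseq]
  · rw [show (2:ℕ) = 1 + 1 from rfl, hdn 1]; norm_num [fseq]
  · rw [show (3:ℕ) = 2 + 1 from rfl, hdn 2]; norm_num [fseq]
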